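/- arXiv:2411.11653 — 5 statements merged into one kernel-verified Lean document; each statement's English description precedes it below -/
import Mathlib

section
/- Let $\phi, \varepsilon, \alpha \in \mathbb{R}$ with $2\alpha\varepsilon \neq 1$, and define on $D^0 = \{r < 1\}$ (with $r^2 = x_2^2+x_3^2$) the velocity $u^{\rm N}(x) = \frac{2\phi}{\pi}\big((1-r^2) - \varepsilon\alpha(1-2r^2)\big)e_1$ and pressure $p^{\rm N}(x) = -\frac{8\phi}{\pi}x_1 + \varepsilon\alpha\frac{16\phi}{\pi}x_1$. Then $(u^{\rm N},p^{\rm N})$ solves $-\Delta u^{\rm N} + (u^{\rm N}\cdot\nabla)u^{\rm N} + \nabla p^{\rm N} = 0$, $\nabla\cdot u^{\rm N}=0$ in $D^0$, satisfies the non-penetration condition $u^{\rm N}\cdot\nu = 0$ on $\Gamma^0 = \{r=1\}$, and satisfies the Navier slip condition $(I - \nu\otimes\nu)u^{\rm N} = \lambda^\varepsilon (I-\nu\otimes\nu)\mathbb{D}(u^{\rm N})\nu$ on $\Gamma^0$ with slip length $\lambda^\varepsilon = \frac{\alpha\varepsilon}{1 - 2\alpha\varepsilon}$. -/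
/-- Partial derivative in the `i`-th coordinate direction. -/
noncomputable def pd3 (i : Fin 3) (f : (Fin 3 → ℝ) → ℝ) (x : Fin 3 → ℝ) : ℝ :=
  fderiv ℝ f x (Pi.single i 1)

noncomputable def u0fun (A c : ℝ) : (Fin 3 → ℝ) → ℝ :=
  fun y => A * ((1 - ((y 1) ^ 2 + (y 2) ^ 2)) - c * (1 - 2 * ((y 1) ^ 2 + (y 2) ^ 2)))

lemma pd3_const (c : ℝ) (x : Fin 3 → ℝ) (i : Fin 3) : pd3 i (fun _ => c) x = 0 := by
  simp [pd3]

lemma hasF_proj (k : Fin 3) (x : Fin 3 → ℝ) :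
    HasFDerivAt (fun y : Fin 3 → ℝ => y k)
      (ContinuousLinearMap.proj (R := ℝ) (φ := fun _ : Fin 3 => ℝ) k) x :=
  (ContinuousLinearMap.proj (R := ℝ) (φ := fun _ : Fin 3 => ℝ) k).hasFDerivAt

lemma pd3_linear (c : ℝ) (k : Fin 3) (x : Fin 3 → ℝ) (i : Fin 3) :
    pd3 i (fun y => c * y k) x = if i = k then c else 0 := by
  have h := (hasF_proj k x).const_mul c
  rw [pd3, h.fderiv]
  by_cases hik : i = k <;>
    simp [ContinuousLinearMap.smul_apply, Pi.single_apply, hik, eq_comm]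

lemma pd3_lin2 (c d : ℝ) (x : Fin 3 → ℝ) (i : Fin 3) :
    pd3 i (fun y : Fin 3 → ℝ => c * y 0 + d * y 0) x = if i = 0 then c + d else 0 := by
  have h := ((hasF_proj 0 x).const_mul c).add ((hasF_proj 0 x).const_mul d)
  rw [pd3, show (fun y : Fin 3 → ℝ => c * y 0 + d * y 0)
      = (fun y : Fin 3 → ℝ => c * y 0) + (fun y : Fin 3 → ℝ => d * y 0) from rfl, h.fderiv]
  by_cases hik : i = 0 <;>
    simp [ContinuousLinearMap.smul_apply, ContinuousLinearMap.add_apply,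
      Pi.single_apply, hik, eq_comm]

lemma hasF_quad (a b : ℝ) (x : Fin 3 → ℝ) :
    HasFDerivAt (fun y : Fin 3 → ℝ => a + b * (y 1 * y 1 + y 2 * y 2))
      (b • ((x 1 • ContinuousLinearMap.proj (R := ℝ) (φ := fun _ : Fin 3 => ℝ) 1
              + x 1 • ContinuousLinearMap.proj 1)
          + (x 2 • ContinuousLinearMap.proj (R := ℝ) (φ := fun _ : Fin 3 => ℝ) 2
              + x 2 • ContinuousLinearMap.proj 2))) x := by
  have h1 := (hasF_proj 1 x).mul (hasF_proj 1 x)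
  have h2 := (hasF_proj 2 x).mul (hasF_proj 2 x)
  exact ((h1.add h2).const_mul b).const_add a

lemma pd3_quad (a b : ℝ) (x : Fin 3 → ℝ) (i : Fin 3) :
    pd3 i (fun y : Fin 3 → ℝ => a + b * ((y 1) ^ 2 + (y 2) ^ 2)) x
      = if i = 0 then 0 else 2 * b * x i := by
  have he : (fun y : Fin 3 → ℝ => a + b * ((y 1) ^ 2 + (y 2) ^ 2))
      = fun y : Fin 3 → ℝ => a + b * (y 1 * y 1 + y 2 * y 2) := by
    funext y; ring
  rw [pd3, he, (hasF_quad a b x).fderiv]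
  fin_cases i <;>
    simp [ContinuousLinearMap.smul_apply, ContinuousLinearMap.add_apply,
      Pi.single_apply] <;> ring

lemma u0fun_eq (A c : ℝ) :
    u0fun A c = fun y : Fin 3 → ℝ => (A * (1 - c)) + (A * (2 * c - 1)) * ((y 1) ^ 2 + (y 2) ^ 2) := by
  funext y; simp [u0fun]; ring

lemma pd3_u0 (A c : ℝ) (x : Fin 3 → ℝ) (i : Fin 3) :
    pd3 i (u0fun A c) x = if i = 0 then 0 else 2 * (A * (2 * c - 1)) * x i := by
  rw [u0fun_eq]; exact pd3_quad _ _ x i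

lemma pd3_pd3_u0 (A c : ℝ) (x : Fin 3 → ℝ) (i : Fin 3) :
    pd3 i (pd3 i (u0fun A c)) x = if i = 0 then 0 else 2 * (A * (2 * c - 1)) := by
  have h3 : i = 0 ∨ i = 1 ∨ i = 2 := by omega
  rcases h3 with rfl | rfl | rfl
  · have : (pd3 0 (u0fun A c)) = fun _ : Fin 3 → ℝ => (0:ℝ) := by
      funext y; rw [pd3_u0]; simp
    rw [this, pd3_const]; simp
  · have : (pd3 1 (u0fun A c)) = fun y : Fin 3 → ℝ => (2 * (A * (2 * c - 1))) * y 1 := by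
      funext y; rw [pd3_u0]; simp
    rw [this, pd3_linear]; simp
  · have : (pd3 2 (u0fun A c)) = fun y : Fin 3 → ℝ => (2 * (A * (2 * c - 1))) * y 2 := by
      funext y; rw [pd3_u0]; simp
    rw [this, pd3_linear]; simp

theorem stmt_5 (φ ε α : ℝ) (hα : 2 * α * ε ≠ 1) :
    let uN : (Fin 3 → ℝ) → Fin 3 → ℝ :=
      fun x j => if j = 0 then
        (2 * φ / Real.pi) *
          ((1 - ((x 1) ^ 2 + (x 2) ^ 2)) - ε * α * (1 - 2 * ((x 1) ^ 2 + (x 2) ^ 2)))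
      else 0
    let pN : (Fin 3 → ℝ) → ℝ :=
      fun x => -(8 * φ / Real.pi) * x 0 + ε * α * (16 * φ / Real.pi) * x 0
    -- inward unit normal on Γ⁰ = {r = 1}
    let ν : (Fin 3 → ℝ) → Fin 3 → ℝ := fun x j => if j = 0 then 0 else -(x j)
    -- strain rate tensor 𝔻(uᴺ)
    let Dm : (Fin 3 → ℝ) → Fin 3 → Fin 3 → ℝ :=
      fun x j k => (pd3 k (fun y => uN y j) x + pd3 j (fun y => uN y k) x) / 2
    let lam : ℝ := α * ε / (1 - 2 * α * ε)
    -- stationary Navier-Stokes equations in D⁰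
    (∀ x : Fin 3 → ℝ, (x 1) ^ 2 + (x 2) ^ 2 < 1 → ∀ j : Fin 3,
        -(∑ i : Fin 3, pd3 i (pd3 i (fun y => uN y j)) x)
          + (∑ i : Fin 3, uN x i * pd3 i (fun y => uN y j) x)
          + pd3 j pN x = 0) ∧
    -- divergence free
    (∀ x : Fin 3 → ℝ, (x 1) ^ 2 + (x 2) ^ 2 < 1 →
        (∑ i : Fin 3, pd3 i (fun y => uN y i) x) = 0) ∧
    -- non-penetration condition uᴺ · ν = 0 on Γ⁰
    (∀ x : Fin 3 → ℝ, (x 1) ^ 2 + (x 2) ^ 2 = 1 →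
        (∑ i : Fin 3, uN x i * ν x i) = 0) ∧
    -- Navier slip condition (I - ν⊗ν) uᴺ = λᵉ (I - ν⊗ν) 𝔻(uᴺ) ν on Γ⁰
    (∀ x : Fin 3 → ℝ, (x 1) ^ 2 + (x 2) ^ 2 = 1 → ∀ j : Fin 3,
        uN x j - (∑ i : Fin 3, ν x i * uN x i) * ν x j
          = lam * ((∑ k : Fin 3, Dm x j k * ν x k)
              - (∑ i : Fin 3, ν x i * (∑ k : Fin 3, Dm x i k * ν x k)) * ν x j)) := by
  intro uN pN ν Dm lam
  set A : ℝ := 2 * φ / Real.pi with hA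
  set c : ℝ := ε * α with hc
  have e0 : (fun y => uN y 0) = u0fun A c := rfl
  have e1 : (fun y => uN y 1) = fun _ : Fin 3 → ℝ => (0:ℝ) := rfl
  have e2 : (fun y => uN y 2) = fun _ : Fin 3 → ℝ => (0:ℝ) := rfl
  have epN : pN = fun y : Fin 3 → ℝ =>
      (-(8 * φ / Real.pi)) * y 0 + (ε * α * (16 * φ / Real.pi)) * y 0 := rfl
  have v0 : ∀ x : Fin 3 → ℝ, uN x 0 = u0fun A c x := fun _ => rfl
  have v1 : ∀ x : Fin 3 → ℝ, uN x 1 = 0 := fun _ => rfl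
  have v2 : ∀ x : Fin 3 → ℝ, uN x 2 = 0 := fun _ => rfl
  have n0 : ∀ x : Fin 3 → ℝ, ν x 0 = 0 := fun _ => rfl
  have n1 : ∀ x : Fin 3 → ℝ, ν x 1 = -(x 1) := fun _ => rfl
  have n2 : ∀ x : Fin 3 → ℝ, ν x 2 = -(x 2) := fun _ => rfl
  have hDm : ∀ (x : Fin 3 → ℝ) (j k : Fin 3), Dm x j k
      = (pd3 k (fun y => uN y j) x + pd3 j (fun y => uN y k) x) / 2 := fun _ _ _ => rfl
  have hlam : lam = α * ε / (1 - 2 * α * ε) := rfl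
  have hπ : (1 : ℝ) - 2 * α * ε ≠ 0 := sub_ne_zero.mpr (Ne.symm hα)
  have f1 : ((1 : Fin 3) = 0) = False := by decide
  have f2 : ((2 : Fin 3) = 0) = False := by decide
  refine ⟨?_, ?_, ?_, ?_⟩
  · intro x hx j
    have h3 : j = 0 ∨ j = 1 ∨ j = 2 := by omega
    have hz : ∀ i : Fin 3, (pd3 i (fun _ : Fin 3 → ℝ => (0:ℝ)))
        = fun _ : Fin 3 → ℝ => (0:ℝ) := by
      intro i; funext y; rw [pd3_const]
    rcases h3 with rfl | rfl | rfl
    · rw [Fin.sum_univ_three, Fin.sum_univ_three, e0, epN]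
      simp only [pd3_pd3_u0, pd3_u0, pd3_lin2, v0, v1, v2, f1, f2,
        if_true, if_false, eq_self_iff_true]
      rw [hA, hc]
      field_simp
      ring
    · rw [Fin.sum_univ_three, Fin.sum_univ_three, e1, epN]
      simp only [hz, pd3_const, pd3_lin2, v0, v1, v2, f1, f2, if_true, if_false,
        eq_self_iff_true]
      norm_num
    · rw [Fin.sum_univ_three, Fin.sum_univ_three, e2, epN]
      simp only [hz, pd3_const, pd3_lin2, v0, v1, v2, f1, f2, if_true, if_false,
        eq_self_iff_true]
      norm_num
  · intro x hx
    rw [Fin.sum_univ_three, e0, e1, e2]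
    simp only [pd3_u0, pd3_const, eq_self_iff_true, if_true]
    norm_num
  · intro x hx
    rw [Fin.sum_univ_three, v0, v1, v2, n0, n1, n2]
    ring
  · intro x hx j
    have hDν0 : ∀ i : Fin 3, (∑ k : Fin 3, Dm x i k * ν x k)
        = if i = 0 then -(A * (2 * c - 1)) else 0 := by
      intro i
      have hi3 : i = 0 ∨ i = 1 ∨ i = 2 := by omega
      rcases hi3 with rfl | rfl | rfl
      · rw [Fin.sum_univ_three, hDm, hDm, hDm, n0, n1, n2, e0, e1, e2]
        simp only [pd3_u0, pd3_const, f1, f2, if_true, if_false, eq_self_iff_true]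
        norm_num
        linear_combination (-(A * (2 * c - 1))) * hx
      · rw [Fin.sum_univ_three, hDm, hDm, hDm, n0, n1, n2, e0, e1, e2]
        simp only [pd3_u0, pd3_const, f1, f2, if_true, if_false, eq_self_iff_true]
        norm_num
      · rw [Fin.sum_univ_three, hDm, hDm, hDm, n0, n1, n2, e0, e1, e2]
        simp only [pd3_u0, pd3_const, f1, f2, if_true, if_false, eq_self_iff_true]
        norm_num
    have hsum1 : (∑ i : Fin 3, ν x i * uN x i) = 0 := by
      rw [Fin.sum_univ_three, n0, n1, n2, v0, v1, v2]; ring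
    have houter : (∑ i : Fin 3, ν x i * (∑ k : Fin 3, Dm x i k * ν x k)) = 0 := by
      rw [Fin.sum_univ_three, hDν0 0, hDν0 1, hDν0 2, n0, n1, n2]
      simp [f1, f2]
    have h3 : j = 0 ∨ j = 1 ∨ j = 2 := by omega
    rcases h3 with rfl | rfl | rfl
    · rw [hsum1, houter, hDν0 0, n0, v0]
      simp only [eq_self_iff_true, if_true]
      have hu : u0fun A c x = A * c := by
        simp only [u0fun]; rw [hx]; ring
      rw [hu, hlam, hA, hc]
      field_simp
      have hπ' : (1:ℝ) - ε * α * 2 ≠ 0 := by intro h; apply hπ; linarith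
      have hX : (1 - ε * α * 2) * (1 - ε * α * 2)⁻¹ = 1 := mul_inv_cancel₀ hπ'
      linear_combination (-(φ * ε * α * 2)) * hX
    · rw [hsum1, houter, hDν0 1, n1, v1]
      simp [f1]
    · rw [hsum1, houter, hDν0 2, n2, v2]
      simp [f2]
end

section
/- Let $\omega_1, \omega_2 \subset \mathbb{R}^d$ be bounded John domains with centers $x^1, x^2$ and John constants $L_1, L_2$, and suppose there is a Lipschitz curve $\gamma$ in $\omega_1 \cup \omega_2$ connecting $x^1$ and $x^2$ with $\operatorname{dist}(\gamma, \partial(\omega_1\cup\omega_2)) \ge d_\gamma > 0$. Then $\omega_1 \cup \omega_2$ is a John domain, with a John constant depending only on $L_1$, $L_2$, $d_\gamma$, the Lipschitz constant and length of $\gamma$, and the diameters of $\omega_1, \omega_2$. -/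
/-- `ω` is a John domain with center `c` and constant `L`: every point `y ∈ ω` is joined
to `c` by an `L`-Lipschitz curve staying in `ω` whose distance to the boundary grows
at least linearly. -/
def IsJohnDomain {d : ℕ} (ω : Set (EuclideanSpace ℝ (Fin d)))
    (c : EuclideanSpace ℝ (Fin d)) (L : ℝ) : Prop :=
  c ∈ ω ∧ ∀ y ∈ ω, ∃ ρ : ℝ → EuclideanSpace ℝ (Fin d),
    LipschitzOnWith (Real.toNNReal L) ρ (Set.Icc 0 (dist y c)) ∧
    (∀ t ∈ Set.Icc 0 (dist y c), ρ t ∈ ω) ∧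
    ρ 0 = y ∧ ρ (dist y c) = c ∧
    ∀ t ∈ Set.Icc 0 (dist y c), t / L ≤ Metric.infDist (ρ t) (frontier ω)

open Set Metric

/-- A segment from a point of `s` to a point outside `s` meets the frontier of `s`
no farther than the endpoint. -/
lemma exists_frontier_dist_le' {E : Type*} [NormedAddCommGroup E] [NormedSpace ℝ E]
    {s : Set E} {x w : E} (hx : x ∈ s) (hw : w ∉ s) :
    ∃ z ∈ frontier s, dist x z ≤ dist x w := by
  have hmeet : (segment ℝ x w ∩ frontier s).Nonempty := by
    by_contra h
    rw [Set.not_nonempty_iff_eq_empty, Set.eq_empty_iff_forall_notMem] at h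
    have hsub : segment ℝ x w ⊆ interior s ∪ (closure s)ᶜ := by
      intro z hz
      by_cases hc : z ∈ closure s
      · by_cases hi : z ∈ interior s
        · exact Or.inl hi
        · exact absurd ⟨hz, hc, hi⟩ (h z)
      · exact Or.inr hc
    have hdisj : Disjoint (interior s) (closure s)ᶜ :=
      disjoint_compl_right.mono_left (interior_subset.trans subset_closure)
    rcases (convex_segment x w).isPreconnected.subset_or_subset isOpen_interior
        isClosed_closure.isOpen_compl hdisj hsub with h1 | h1
    · exact hw (interior_subset (h1 (right_mem_segment ℝ x w)))
    · exact (h1 (left_mem_segment ℝ x w)) (subset_closure hx)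
  obtain ⟨z, hzseg, hzf⟩ := hmeet
  refine ⟨z, hzf, ?_⟩
  have h1 := dist_add_dist_of_mem_segment hzseg
  have h0 : (0:ℝ) ≤ dist z w := dist_nonneg
  linarith

/-- `infDist` to the frontier grows when passing to an open superset. -/
lemma infDist_frontier_le_infDist_frontier' {E : Type*} [NormedAddCommGroup E]
    [NormedSpace ℝ E] {s U : Set E} (hsU : s ⊆ U) (hU : IsOpen U)
    (hne : (frontier U).Nonempty) {x : E} (hx : x ∈ s) :
    infDist x (frontier s) ≤ infDist x (frontier U) := by
  by_contra h
  push_neg at h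
  obtain ⟨w, hwF, hwd⟩ := (infDist_lt_iff hne).1 h
  have hw : w ∉ s := by
    intro hws
    exact (hU.frontier_eq ▸ hwF).2 (hsU hws)
  obtain ⟨z, hzF, hzd⟩ := exists_frontier_dist_le' hx hw
  have := infDist_le_dist_of_mem hzF (x := x)
  linarith

/-- If the frontier of a set is at distance `≥ r` from `x ∈ U`, then `ball x r ⊆ U`. -/
lemma ball_subset_of_infDist_frontier' {E : Type*} [NormedAddCommGroup E]
    [NormedSpace ℝ E] {U : Set E} {x : E} (hx : x ∈ U) {r : ℝ}
    (hr : r ≤ infDist x (frontier U)) : ball x r ⊆ U := by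
  intro z hz
  by_contra hzU
  obtain ⟨w, hwF, hwd⟩ := exists_frontier_dist_le' hx hzU
  have h1 := infDist_le_dist_of_mem hwF (x := x)
  have h2 : dist x z < r := by rw [dist_comm]; exact mem_ball.1 hz
  linarith


set_option maxHeartbeats 2000000 in
theorem stmt_6 (d : ℕ) :
    -- a John constant for the union, depending only on L₁, L₂, d_γ, the Lipschitz
    -- constant (and hence length) of γ, and the diameters of ω₁, ω₂
    ∃ F : ℝ → ℝ → ℝ → ℝ → ℝ → ℝ → ℝ,
      ∀ (ω₁ ω₂ : Set (EuclideanSpace ℝ (Fin d)))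
        (x₁ x₂ : EuclideanSpace ℝ (Fin d)) (L₁ L₂ dγ Kγ : ℝ),
        IsOpen ω₁ → IsOpen ω₂ →
        Bornology.IsBounded ω₁ → Bornology.IsBounded ω₂ →
        0 < L₁ → 0 < L₂ → 0 < dγ →
        IsJohnDomain ω₁ x₁ L₁ → IsJohnDomain ω₂ x₂ L₂ →
        (ω₁ ∩ ω₂).Nonempty →
        ∀ γ : ℝ → EuclideanSpace ℝ (Fin d),
          LipschitzOnWith (Real.toNNReal Kγ) γ (Set.Icc 0 1) →
          γ 0 = x₁ → γ 1 = x₂ →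
          (∀ t ∈ Set.Icc (0 : ℝ) 1, γ t ∈ ω₁ ∪ ω₂) →
          (∀ t ∈ Set.Icc (0 : ℝ) 1, dγ ≤ Metric.infDist (γ t) (frontier (ω₁ ∪ ω₂))) →
          ∃ c ∈ ω₁ ∪ ω₂, IsJohnDomain (ω₁ ∪ ω₂) c
            (F L₁ L₂ dγ Kγ (EMetric.diam ω₁).toReal (EMetric.diam ω₂).toReal) := by
  classical
  refine ⟨fun L₁ L₂ dγ Kγ _D₁ D₂ =>
    L₁ + L₂ + 1 + 2 * (D₂ + max Kγ 1) * max L₂ 1 / dγ, ?_⟩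
  intro ω₁ ω₂ x₁ x₂ L₁ L₂ dγ Kγ hO₁ hO₂ hB₁ hB₂ hL₁ hL₂ hdγ hJ₁ hJ₂ hinter γ hγlip hγ0 hγ1
    hγmem hγdist
  set U := ω₁ ∪ ω₂ with hUdef
  set D₂ := (EMetric.diam ω₂).toReal with hD₂def
  set K := max Kγ 1 with hKdef
  set M := max L₂ 1 with hMdef
  set L := L₁ + L₂ + 1 + 2 * (D₂ + K) * M / dγ with hLdef
  have hK1 : (1:ℝ) ≤ K := le_max_right _ _
  have hM1 : (1:ℝ) ≤ M := le_max_right _ _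
  have hML₂ : L₂ ≤ M := le_max_left _ _
  have hD₂0 : 0 ≤ D₂ := ENNReal.toReal_nonneg
  have hrest : 0 ≤ 2 * (D₂ + K) * M / dγ := by
    apply div_nonneg _ hdγ.le
    nlinarith
  have hLL₁ : L₁ ≤ L := by rw [hLdef]; linarith
  have hLL₂ : L₂ ≤ L := by rw [hLdef]; linarith
  have hL1 : 1 ≤ L := by rw [hLdef]; linarith
  have hLpos : 0 < L := by linarith
  have hLK : (D₂ + K) / dγ ≤ L := by
    have h1 : D₂ + K ≤ 2 * (D₂ + K) * M := by nlinarith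
    have h2 : (D₂ + K) / dγ ≤ 2 * (D₂ + K) * M / dγ := by
      exact div_le_div_of_nonneg_right h1 hdγ.le
    rw [hLdef]; linarith
  have hUopen : IsOpen U := hO₁.union hO₂
  have hx₁ω : x₁ ∈ ω₁ := hJ₁.1
  have hx₂ω : x₂ ∈ ω₂ := hJ₂.1
  have hx₁U : x₁ ∈ U := Or.inl hx₁ω
  have hLcoe : (Real.toNNReal L : ℝ) = L := Real.coe_toNNReal _ hLpos.le
  have hL₂coe : (Real.toNNReal L₂ : ℝ) = L₂ := Real.coe_toNNReal _ hL₂.le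
  show ∃ c ∈ U, IsJohnDomain U c L
  refine ⟨x₁, hx₁U, hx₁U, ?_⟩
  intro y hyU
  rcases subsingleton_or_nontrivial (EuclideanSpace ℝ (Fin d)) with hsub | hnt
  · refine ⟨fun _ => y, ?_, fun t _ => hyU, rfl, Subsingleton.elim _ _, ?_⟩
    · apply LipschitzOnWith.of_dist_le_mul
      intro a _ b _
      simp only [dist_self]
      positivity
    intro t ht
    have hd0 : dist y x₁ = 0 := by rw [Subsingleton.elim y x₁, dist_self]
    have ht0 : t = 0 := le_antisymm (hd0 ▸ ht.2) ht.1
    rw [ht0, zero_div]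
    exact infDist_nonneg
  have hFne : (frontier U).Nonempty := by
    by_contra h
    rw [Set.not_nonempty_iff_eq_empty] at h
    rcases isClopen_iff.1 (isClopen_iff_frontier_eq_empty.2 h) with h' | h'
    · rw [h'] at hx₁U; exact hx₁U
    · exact NormedSpace.unbounded_univ ℝ (EuclideanSpace ℝ (Fin d)) (h' ▸ (hB₁.union hB₂))
  have hballγ : ball x₁ dγ ⊆ U := by
    apply ball_subset_of_infDist_frontier' hx₁U
    have := hγdist 0 ⟨le_refl 0, zero_le_one⟩
    rwa [hγ0] at this
  rcases hyU with hy₁ | hy₂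
  · -- y ∈ ω₁ : use the John curve of ω₁
    obtain ⟨ρ, hlip, hmem, h0, hT, hcig⟩ := hJ₁.2 y hy₁
    refine ⟨ρ, ?_, fun t ht => Or.inl (hmem t ht), h0, hT, ?_⟩
    · apply LipschitzOnWith.of_dist_le_mul
      intro a ha b hb
      have h1 := hlip.dist_le_mul a ha b hb
      have h2 : (Real.toNNReal L₁ : ℝ) ≤ (Real.toNNReal L : ℝ) := by
        rw [Real.coe_toNNReal _ hL₁.le, hLcoe]; exact hLL₁
      calc dist (ρ a) (ρ b) ≤ (Real.toNNReal L₁ : ℝ) * dist a b := h1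
        _ ≤ (Real.toNNReal L : ℝ) * dist a b := mul_le_mul_of_nonneg_right h2 dist_nonneg
    · intro t ht
      have h1 := hcig t ht
      have h2 : infDist (ρ t) (frontier ω₁) ≤ infDist (ρ t) (frontier U) :=
        infDist_frontier_le_infDist_frontier' Set.subset_union_left hUopen hFne (hmem t ht)
      have h3 : t / L ≤ t / L₁ := div_le_div_of_nonneg_left ht.1 hL₁ hLL₁
      linarith
  · -- y ∈ ω₂
    by_cases hTsmall : dist y x₁ ≤ dγ / 2
    · -- y is close to the center x₁ : straight segment
      by_cases hT0 : dist y x₁ = 0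
      · have hyx : y = x₁ := by rwa [dist_eq_zero] at hT0
        refine ⟨fun _ => y, ?_, fun t _ => Or.inr hy₂, rfl, hyx, ?_⟩
        · apply LipschitzOnWith.of_dist_le_mul
          intro a _ b _
          simp only [dist_self]
          positivity
        intro t ht
        have ht0 : t = 0 := le_antisymm (hT0 ▸ ht.2) ht.1
        rw [ht0, zero_div]
        exact infDist_nonneg
      · have hTpos : 0 < dist y x₁ := lt_of_le_of_ne dist_nonneg (Ne.symm hT0)
        set T := dist y x₁ with hTdef
        have hnyx : ‖y - x₁‖ = T := by rw [← dist_eq_norm]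
        have key : ∀ a b : ℝ,
            dist (x₁ + ((T - a)/T) • (y - x₁)) (x₁ + ((T - b)/T) • (y - x₁)) = dist a b := by
          intro a b
          rw [dist_add_left, dist_eq_norm, ← sub_smul, norm_smul, Real.norm_eq_abs, hnyx,
            div_sub_div_same, abs_div, abs_of_pos hTpos, div_mul_cancel₀ _ hTpos.ne',
            Real.dist_eq]
          have h' : T - a - (T - b) = b - a := by ring
          rw [h', abs_sub_comm]
        have hx₁eq : x₁ + ((T - T)/T) • (y - x₁) = x₁ := by simp
        have hdx : ∀ t ∈ Icc (0:ℝ) T, dist (x₁ + ((T - t)/T) • (y - x₁)) x₁ = T - t := by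
          intro t ht
          rw [dist_eq_norm, add_sub_cancel_left, norm_smul, Real.norm_eq_abs, hnyx, abs_div,
            abs_of_pos hTpos, div_mul_cancel₀ _ hTpos.ne', abs_of_nonneg (by linarith [ht.2])]
        refine ⟨fun t => x₁ + ((T - t)/T) • (y - x₁), ?_, ?_, ?_, ?_, ?_⟩
        · apply LipschitzOnWith.of_dist_le_mul
          intro a _ b _
          rw [key a b]
          have h2 : (1:ℝ) ≤ (Real.toNNReal L : ℝ) := by rw [hLcoe]; exact hL1
          nlinarith [dist_nonneg (x := a) (y := b)]
        · intro t ht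
          apply hballγ
          rw [mem_ball, hdx t ht]
          linarith [ht.1]
        · show x₁ + ((T - 0)/T) • (y - x₁) = y
          rw [sub_zero, div_self hTpos.ne', one_smul]
          abel
        · exact hx₁eq
        · intro t ht
          have h1 : infDist x₁ (frontier U) ≤
              infDist (x₁ + ((T - t)/T) • (y - x₁)) (frontier U) +
                dist x₁ (x₁ + ((T - t)/T) • (y - x₁)) := infDist_le_infDist_add_dist
          have h2 : dγ ≤ infDist x₁ (frontier U) := by
            have := hγdist 0 ⟨le_refl 0, zero_le_one⟩
            rwa [hγ0] at this
          have h3 : t / L ≤ t := div_le_self ht.1 hL1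
          have h4 : dist x₁ (x₁ + ((T - t)/T) • (y - x₁)) = T - t := by
            rw [dist_comm]; exact hdx t ht
          rw [h4] at h1
          linarith [ht.2]
    · -- y is far from x₁ : concatenate the John curve of ω₂ with γ
      push_neg at hTsmall
      obtain ⟨ρ₂, hlip₂, hmem₂, h0₂, hT₂, hcig₂⟩ := hJ₂.2 y hy₂
      set T := dist y x₁ with hTdef
      set T₁ := dist y x₂ with hT₁def
      set S := T₁ + K with hSdef
      have hTpos : 0 < T := lt_trans (by linarith) hTsmall
      have hT₁0 : (0:ℝ) ≤ T₁ := dist_nonneg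
      have hKγK : (Real.toNNReal Kγ : ℝ) ≤ K := by
        rw [Real.coe_toNNReal']
        exact max_le_max (le_refl Kγ) zero_le_one
      have hKpos : (0:ℝ) < K := by linarith
      have hd12 : dist x₁ x₂ ≤ K := by
        have h1 := hγlip.dist_le_mul 0 ⟨le_refl 0, zero_le_one⟩ 1 ⟨zero_le_one, le_refl 1⟩
        rw [hγ0, hγ1] at h1
        have hd01 : dist (0:ℝ) 1 = 1 := by simp [Real.dist_eq]
        rw [hd01, mul_one] at h1
        linarith
      have hTS : T ≤ S := by
        have h1 : T ≤ T₁ + dist x₂ x₁ := dist_triangle y x₂ x₁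
        rw [dist_comm] at h1
        rw [hSdef]; linarith
      have hT₁D : T₁ ≤ D₂ := Metric.dist_le_diam_of_mem hB₂ hy₂ hx₂ω
      have hSpos : 0 < S := by rw [hSdef]; linarith
      set r := S / T with hrdef
      have hr1 : 1 ≤ r := (one_le_div hTpos).2 hTS
      have hrT : r * T = S := div_mul_cancel₀ _ hTpos.ne'
      set σ : ℝ → EuclideanSpace ℝ (Fin d) :=
        fun s => if s ≤ T₁ then ρ₂ s else γ (1 - (s - T₁)/K) with hσdef
      have harg : ∀ b, T₁ < b → b ≤ S → 1 - (b - T₁)/K ∈ Icc (0:ℝ) 1 := by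
        intro b hb1 hb2
        constructor
        · have h1 : (b - T₁)/K ≤ 1 := (div_le_one hKpos).2 (by rw [hSdef] at hb2; linarith)
          linarith
        · have h1 : 0 ≤ (b - T₁)/K := div_nonneg (by linarith) hKpos.le
          linarith
      have hγpart : ∀ a b, T₁ ≤ a → a ≤ b → b ≤ S →
          dist (γ (1 - (a - T₁)/K)) (γ (1 - (b - T₁)/K)) ≤ b - a := by
        intro a b ha hab hb
        have hua : 1 - (a - T₁)/K ∈ Icc (0:ℝ) 1 := by
          constructor
          · have h1 : (a - T₁)/K ≤ 1 := (div_le_one hKpos).2 (by rw [hSdef] at hb; linarith)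
            linarith
          · have h1 : 0 ≤ (a - T₁)/K := div_nonneg (by linarith) hKpos.le
            linarith
        have hub : 1 - (b - T₁)/K ∈ Icc (0:ℝ) 1 := by
          constructor
          · have h1 : (b - T₁)/K ≤ 1 := (div_le_one hKpos).2 (by rw [hSdef] at hb; linarith)
            linarith
          · have h1 : 0 ≤ (b - T₁)/K := div_nonneg (by linarith) hKpos.le
            linarith
        have h1 := hγlip.dist_le_mul _ hua _ hub
        have hdd : dist (1 - (a - T₁)/K) (1 - (b - T₁)/K) = (b - a)/K := by
          rw [Real.dist_eq]
          have he : (1 - (a - T₁)/K) - (1 - (b - T₁)/K) = (b - a)/K := by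
            field_simp
            ring
          rw [he, abs_of_nonneg (div_nonneg (by linarith) hKpos.le)]
        rw [hdd] at h1
        calc dist (γ (1 - (a - T₁)/K)) (γ (1 - (b - T₁)/K))
            ≤ (Real.toNNReal Kγ : ℝ) * ((b - a)/K) := h1
          _ ≤ K * ((b - a)/K) :=
              mul_le_mul_of_nonneg_right hKγK (div_nonneg (by linarith) hKpos.le)
          _ = b - a := by field_simp
      have keyd : ∀ a ∈ Icc (0:ℝ) S, ∀ b ∈ Icc (0:ℝ) S, a ≤ b →
          dist (σ a) (σ b) ≤ M * (b - a) := by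
        intro a ha b hb hab
        by_cases haT : a ≤ T₁ <;> by_cases hbT : b ≤ T₁
        · simp only [hσdef, if_pos haT, if_pos hbT]
          have h1 := hlip₂.dist_le_mul a ⟨ha.1, haT⟩ b ⟨hb.1, hbT⟩
          rw [hL₂coe, Real.dist_eq, abs_of_nonpos (by linarith)] at h1
          nlinarith
        · -- a ≤ T₁ < b
          have hbT' : T₁ < b := not_le.1 hbT
          have h1 : dist (ρ₂ a) x₂ ≤ L₂ * (T₁ - a) := by
            have h2 := hlip₂.dist_le_mul a ⟨ha.1, haT⟩ T₁ ⟨hT₁0, le_refl T₁⟩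
            rw [hL₂coe, hT₂, Real.dist_eq, abs_of_nonpos (by linarith)] at h2
            linarith
          have h2 : dist x₂ (γ (1 - (b - T₁)/K)) ≤ b - T₁ := by
            have h3 := hγpart T₁ b (le_refl T₁) hbT'.le hb.2
            simpa [hγ1] using h3
          calc dist (σ a) (σ b) ≤ dist (σ a) x₂ + dist x₂ (σ b) := dist_triangle _ _ _
            _ = dist (ρ₂ a) x₂ + dist x₂ (γ (1 - (b - T₁)/K)) := by
                simp only [hσdef, if_pos haT, if_neg hbT]
            _ ≤ L₂ * (T₁ - a) + (b - T₁) := add_le_add h1 h2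
            _ ≤ M * (b - a) := by nlinarith
        · exact absurd (le_trans hab hbT) haT
        · simp only [hσdef, if_neg haT, if_neg hbT]
          have h1 := hγpart a b (not_le.1 haT).le hab hb.2
          nlinarith
      have hmap : ∀ t ∈ Icc (0:ℝ) T, r * t ∈ Icc (0:ℝ) S ∧ t ≤ r * t := by
        intro t ht
        refine ⟨⟨mul_nonneg (by linarith) ht.1, ?_⟩, ?_⟩
        · calc r * t ≤ r * T := mul_le_mul_of_nonneg_left ht.2 (by linarith)
            _ = S := hrT
        · nlinarith [ht.1]
      have hMrL : M * r ≤ L := by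
        have hrbound : r ≤ 2 * (D₂ + K) / dγ := by
          rw [hrdef, div_le_div_iff₀ hTpos hdγ]
          have hSD : S ≤ D₂ + K := by rw [hSdef]; linarith
          nlinarith
        have h1 : M * r ≤ M * (2 * (D₂ + K) / dγ) :=
          mul_le_mul_of_nonneg_left hrbound (by linarith)
        have h2 : M * (2 * (D₂ + K) / dγ) = 2 * (D₂ + K) * M / dγ := by ring
        rw [hLdef]; linarith
      refine ⟨fun t => σ (r * t), ?_, ?_, ?_, ?_, ?_⟩
      · apply LipschitzOnWith.of_dist_le_mul
        intro a ha b hb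
        rw [hLcoe]
        have main : ∀ a' ∈ Icc (0:ℝ) T, ∀ b' ∈ Icc (0:ℝ) T, a' ≤ b' →
            dist (σ (r * a')) (σ (r * b')) ≤ L * (b' - a') := by
          intro a' ha' b' hb' hab
          have h1 := keyd (r * a') (hmap a' ha').1 (r * b') (hmap b' hb').1
            (mul_le_mul_of_nonneg_left hab (by linarith))
          have h2 : M * (r * b' - r * a') = M * r * (b' - a') := by ring
          have h3 : M * r * (b' - a') ≤ L * (b' - a') :=
            mul_le_mul_of_nonneg_right hMrL (by linarith)
          linarith
        rcases le_total a b with h | h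
        · have := main a ha b hb h
          rw [Real.dist_eq, abs_of_nonpos (by linarith)]
          linarith
        · have := main b hb a ha h
          rw [dist_comm, Real.dist_eq, abs_of_nonneg (by linarith)]
          linarith
      · intro t ht
        have hs := (hmap t ht).1
        by_cases hsT : r * t ≤ T₁
        · show σ (r * t) ∈ U
          simp only [hσdef, if_pos hsT]
          exact Or.inr (hmem₂ _ ⟨hs.1, hsT⟩)
        · show σ (r * t) ∈ U
          simp only [hσdef, if_neg hsT]
          exact hγmem _ (harg _ (not_le.1 hsT) hs.2)
      · show σ (r * 0) = y
        rw [mul_zero]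
        simp only [hσdef, if_pos hT₁0]
        exact h0₂
      · show σ (r * T) = x₁
        rw [hrT]
        have hST₁ : ¬ S ≤ T₁ := by rw [hSdef]; linarith
        simp only [hσdef, if_neg hST₁]
        have h' : 1 - (S - T₁)/K = 0 := by rw [hSdef]; field_simp; ring
        rw [h', hγ0]
      · intro t ht
        have hs := hmap t ht
        by_cases hsT : r * t ≤ T₁
        · have hc := hcig₂ (r * t) ⟨hs.1.1, hsT⟩
          have hmono : infDist (ρ₂ (r * t)) (frontier ω₂) ≤ infDist (ρ₂ (r * t)) (frontier U) :=
            infDist_frontier_le_infDist_frontier' Set.subset_union_right hUopen hFne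
              (hmem₂ _ ⟨hs.1.1, hsT⟩)
          have e1 : t / L ≤ t / L₂ := div_le_div_of_nonneg_left ht.1 hL₂ hLL₂
          have e2 : t / L₂ ≤ (r * t) / L₂ := (div_le_div_iff_of_pos_right hL₂).2 hs.2
          show t / L ≤ infDist (σ (r * t)) (frontier U)
          simp only [hσdef, if_pos hsT]
          linarith
        · have hu := harg _ (not_le.1 hsT) hs.1.2
          have hc := hγdist _ hu
          have h1 : D₂ + K ≤ L * dγ := by
            have := (div_le_iff₀ hdγ).1 hLK
            linarith
          have h2 : t ≤ D₂ + K := by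
            have h3 : T ≤ D₂ + K := by rw [hSdef] at hTS; linarith
            linarith [ht.2]
          have h4 : t / L ≤ dγ := by
            rw [div_le_iff₀ hLpos]
            nlinarith
          show t / L ≤ infDist (σ (r * t)) (frontier U)
          simp only [hσdef, if_neg hsT]
          linarith
end

section
/- Let $X$ be a real random variable on a probability space, $\lambda \ge 0$, and define $\phi(\lambda) = \mathbb{E}[e^{\lambda X}]$, $\psi(\lambda) = \log\phi(\lambda)$. Suppose that $X$ is bounded and that there exist constants $K, L > 0$ such that for all $\lambda > 0$, $\lambda\phi'(\lambda) - \phi(\lambda)\log\phi(\lambda) \le K \lambda^2 e^{\lambda L} \phi(\lambda)$. Then for all $\lambda > 0$, $\log \mathbb{E}[\exp(\lambda(X - \mathbb{E}[X]))] \le \frac{K}{L}\lambda(e^{\lambda L} - 1)$. -/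
open MeasureTheory

theorem stmt_11 {Ω : Type*} [MeasurableSpace Ω] (μ : Measure Ω)
    [IsProbabilityMeasure μ] (X : Ω → ℝ) (hX : Measurable X)
    (Mb : ℝ) (hbd : ∀ ω, |X ω| ≤ Mb)
    (K L : ℝ) (hK : 0 < K) (hL : 0 < L)
    (hent : ∀ lam : ℝ, 0 < lam →
      lam * deriv (fun l : ℝ => ∫ ω, Real.exp (l * X ω) ∂μ) lam
        - (∫ ω, Real.exp (lam * X ω) ∂μ) * Real.log (∫ ω, Real.exp (lam * X ω) ∂μ)
        ≤ K * lam ^ 2 * Real.exp (lam * L) * (∫ ω, Real.exp (lam * X ω) ∂μ)) :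
    ∀ lam : ℝ, 0 < lam →
      Real.log (∫ ω, Real.exp (lam * (X ω - ∫ ω', X ω' ∂μ)) ∂μ)
        ≤ (K / L) * lam * (Real.exp (lam * L) - 1) := by
  set m : ℝ := ∫ ω', X ω' ∂μ with hm
  set Φ : ℝ → ℝ := fun l : ℝ => ∫ ω, Real.exp (l * X ω) ∂μ with hΦ
  have hXb : ∀ ω, |X ω| ≤ |Mb| := fun ω => (hbd ω).trans (le_abs_self Mb)
  -- integrability of exp(l * X)
  have hint : ∀ l : ℝ, Integrable (fun ω => Real.exp (l * X ω)) μ := by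
    intro l
    refine Integrable.mono' (integrable_const (Real.exp (|l| * |Mb|)))
      ((hX.const_mul l).exp.aestronglyMeasurable) (Filter.Eventually.of_forall fun ω => ?_)
    rw [Real.norm_eq_abs, Real.abs_exp]
    refine Real.exp_le_exp.mpr ?_
    calc l * X ω ≤ |l * X ω| := le_abs_self _
      _ = |l| * |X ω| := abs_mul _ _
      _ ≤ |l| * |Mb| := mul_le_mul_of_nonneg_left (hXb ω) (abs_nonneg l)
  have hpos : ∀ l : ℝ, 0 < Φ l := fun l => ProbabilityTheory.mgf_pos (hint l)
  -- derivative of Φ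
  have hderiv : ∀ l₀ : ℝ, HasDerivAt Φ (∫ ω, X ω * Real.exp (l₀ * X ω) ∂μ) l₀ := by
    intro l₀
    have key := hasDerivAt_integral_of_dominated_loc_of_deriv_le (μ := μ)
      (F := fun (l : ℝ) ω => Real.exp (l * X ω))
      (F' := fun (l : ℝ) ω => X ω * Real.exp (l * X ω))
      (x₀ := l₀) (bound := fun _ => |Mb| * Real.exp ((|l₀| + 1) * |Mb|))
      (Metric.ball_mem_nhds l₀ one_pos)
      (Filter.Eventually.of_forall fun l => ((hX.const_mul l).exp.aestronglyMeasurable))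
      (hint l₀)
      ((hX.mul (hX.const_mul l₀).exp).aestronglyMeasurable)
      (Filter.Eventually.of_forall fun ω => ?_)
      (integrable_const _)
      (Filter.Eventually.of_forall fun ω => ?_)
    · exact key.2
    · intro x hx
      have hxb : |x| ≤ |l₀| + 1 := by
        have h1 : |x - l₀| < 1 := by
          have := Metric.mem_ball.mp hx
          rwa [Real.dist_eq] at this
        calc |x| = |x - l₀ + l₀| := by ring_nf
          _ ≤ |x - l₀| + |l₀| := abs_add_le _ _
          _ ≤ |l₀| + 1 := by linarith
      rw [Real.norm_eq_abs, abs_mul, Real.abs_exp]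
      have h2 : x * X ω ≤ (|l₀| + 1) * |Mb| := by
        calc x * X ω ≤ |x * X ω| := le_abs_self _
          _ = |x| * |X ω| := abs_mul _ _
          _ ≤ (|l₀| + 1) * |Mb| :=
              mul_le_mul hxb (hXb ω) (abs_nonneg _) (by positivity)
      exact mul_le_mul (hXb ω) (Real.exp_le_exp.mpr h2) (Real.exp_pos _).le (abs_nonneg _)
    · intro x _
      have h1 : HasDerivAt (fun l : ℝ => l * X ω) (X ω) x := hasDerivAt_mul_const (X ω)
      simpa [mul_comm] using h1.exp
  set ψ : ℝ → ℝ := fun l => Real.log (Φ l) with hψ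
  have hΦ0 : Φ 0 = 1 := by simp [hΦ]
  have hψ0 : ψ 0 = 0 := by simp [hψ, hΦ0]
  have hψderiv : ∀ l : ℝ, HasDerivAt ψ ((∫ ω, X ω * Real.exp (l * X ω) ∂μ) / Φ l) l :=
    fun l => (hderiv l).log (hpos l).ne'
  have hψ0' : HasDerivAt ψ m 0 := by
    have := hψderiv 0
    simpa [hΦ0, hm] using this
  -- the Herbst function
  set g : ℝ → ℝ := fun l =>
    (if l = 0 then m else ψ l / l) - K / L * (Real.exp (l * L) - 1) with hg
  have hgev : ∀ x : ℝ, x ≠ 0 →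
      g =ᶠ[nhds x] fun l => ψ l / l - K / L * (Real.exp (l * L) - 1) := by
    intro x hx
    filter_upwards [eventually_ne_nhds hx] with l hl
    simp [hg, hl]
  -- g has explicit derivative on (0, ∞)
  have hgderiv : ∀ x : ℝ, 0 < x → HasDerivAt g
      ((((∫ ω, X ω * Real.exp (x * X ω) ∂μ) / Φ x) * x - ψ x) / x ^ 2
        - K / L * (Real.exp (x * L) * L)) x := by
    intro x hx
    have h1 : HasDerivAt (fun l : ℝ => ψ l / l)
        ((((∫ ω, X ω * Real.exp (x * X ω) ∂μ) / Φ x) * x - ψ x * 1) / x ^ 2) x :=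
      (hψderiv x).div (hasDerivAt_id x) hx.ne'
    have h2 : HasDerivAt (fun l : ℝ => K / L * (Real.exp (l * L) - 1))
        (K / L * (Real.exp (x * L) * L)) x := by
      have h3 : HasDerivAt (fun l : ℝ => Real.exp (l * L)) (Real.exp (x * L) * L) x :=
        (hasDerivAt_mul_const L).exp
      simpa using ((h3.sub_const 1).const_mul (K / L))
    exact (((h1.sub h2).congr_deriv (by ring)).congr_of_eventuallyEq (hgev x hx.ne'))
  -- g is antitone on [0, ∞)
  have hanti : AntitoneOn g (Set.Ici 0) := by
    have hint0 : interior (Set.Ici (0 : ℝ)) = Set.Ioi 0 := interior_Ici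
    refine antitoneOn_of_deriv_nonpos (convex_Ici 0) ?_ ?_ ?_
    · -- continuity
      intro x hx
      rcases eq_or_lt_of_le (Set.mem_Ici.mp hx) with h0 | h0
      · subst h0
        rw [← continuousWithinAt_diff_self]
        refine ContinuousWithinAt.sub ?_
          (Continuous.continuousWithinAt (by fun_prop))
        have hslope := hasDerivAt_iff_tendsto_slope.mp hψ0'
        have hsub : Set.Ici (0:ℝ) \ {0} ⊆ {(0:ℝ)}ᶜ := fun y hy => hy.2
        have ht := hslope.mono_left (nhdsWithin_mono 0 hsub)
        show Filter.Tendsto _ (nhdsWithin 0 (Set.Ici 0 \ {0}))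
          (nhds (if (0:ℝ) = 0 then m else ψ 0 / 0))
        rw [if_pos rfl]
        refine ht.congr' ?_
        filter_upwards [self_mem_nhdsWithin] with l hl
        have hl0 : l ≠ 0 := hl.2
        simp [slope_def_field, hl0, hψ0, div_eq_mul_inv]
      · refine ContinuousAt.continuousWithinAt ?_
        have hc : ContinuousAt (fun l : ℝ => ψ l / l - K / L * (Real.exp (l * L) - 1)) x := by
          refine ContinuousAt.sub (ContinuousAt.div ?_ continuousAt_id h0.ne') (by fun_prop)
          exact (hψderiv x).continuousAt
        exact hc.congr (hgev x h0.ne').symm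
    · intro x hx
      rw [hint0] at hx
      exact (hgderiv x hx).differentiableAt.differentiableWithinAt
    · intro x hx
      rw [hint0] at hx
      rw [(hgderiv x hx).deriv]
      have hE := hent x hx
      have hdΦ : deriv Φ x = ∫ ω, X ω * Real.exp (x * X ω) ∂μ := (hderiv x).deriv
      rw [hdΦ] at hE
      have hE' : x * (∫ ω, X ω * Real.exp (x * X ω) ∂μ) - Φ x * Real.log (Φ x)
          ≤ K * x ^ 2 * Real.exp (x * L) * Φ x := hE
      set A : ℝ := ∫ ω, X ω * Real.exp (x * X ω) ∂μ
      have hφx := hpos x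
      have hxpos : (0:ℝ) < x := hx
      have hx2 : (0:ℝ) < x ^ 2 := by positivity
      have hKL : K / L * (Real.exp (x * L) * L) = K * Real.exp (x * L) := by
        field_simp
      rw [hKL, sub_nonpos, div_le_iff₀ hx2]
      have hrw : A / Φ x * x - ψ x = (x * A - Φ x * Real.log (Φ x)) / Φ x := by
        rw [hψ]
        field_simp
      rw [hrw, div_le_iff₀ hφx]
      calc x * A - Φ x * Real.log (Φ x) ≤ K * x ^ 2 * Real.exp (x * L) * Φ x := hE'
        _ = K * Real.exp (x * L) * x ^ 2 * Φ x := by ring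
  -- conclude
  intro lam hlam
  have hg0 : g 0 = m := by simp [hg]
  have hgl := hanti (Set.mem_Ici.mpr le_rfl) (Set.mem_Ici.mpr hlam.le) hlam.le
  rw [hg0] at hgl
  have hglam : g lam = ψ lam / lam - K / L * (Real.exp (lam * L) - 1) := by
    simp [hg, hlam.ne']
  rw [hglam] at hgl
  -- ψ lam ≤ lam * m + (K/L) * lam * (exp(lam L) - 1)
  have hψle : ψ lam ≤ lam * m + K / L * lam * (Real.exp (lam * L) - 1) := by
    have := (div_le_iff₀ hlam).mp (by linarith : ψ lam / lam ≤ m + K / L * (Real.exp (lam * L) - 1))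
    linarith [this]
  have hsplit : (∫ ω, Real.exp (lam * (X ω - m)) ∂μ) = Real.exp (-(lam * m)) * Φ lam := by
    rw [hΦ, ← integral_const_mul]
    congr 1
    ext ω
    rw [← Real.exp_add]
    ring_nf
  rw [hsplit, Real.log_mul (Real.exp_ne_zero _) (hpos lam).ne', Real.log_exp]
  have : Real.log (Φ lam) = ψ lam := rfl
  rw [this]
  linarith [hψle]
end

section
/- Let $x, z \in \mathbb{R}^3$ with $r_x := \sqrt{x_2^2+x_3^2} < 1$, let $z$ lie on the unit cylinder $\Gamma = \{r = 1\}$, and let $c > 0$, $0 < \varepsilon \le 1$. Then there is a constant $C$ depending only on $c$ such that $\int_{\Gamma} \frac{\varepsilon^4 (1-r_x)^2 e^{-2c|x_1 - z_1|}}{|x - z|^6}\, d\Gamma_z \le \frac{C\varepsilon^4}{(1-r_x)^2}$, where $d\Gamma_z$ is the surface measure on $\Gamma$. -/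
open MeasureTheory Real Set

lemma aux_integrable_inv_sq_add {b : ℝ} (hb : 0 < b) :
    Integrable (fun t : ℝ => (b ^ 2 + t ^ 2)⁻¹) := by
  have h : (fun t : ℝ => (b ^ 2 + t ^ 2)⁻¹)
      = fun t : ℝ => b⁻¹ ^ 2 * (1 + (b⁻¹ * t) ^ 2)⁻¹ := by
    funext t
    field_simp
  rw [h]
  exact (((integrable_comp_mul_left_iff (fun y : ℝ => (1 + y ^ 2)⁻¹)
    (inv_ne_zero hb.ne')).2 integrable_inv_one_add_sq).const_mul _)

lemma aux_integral_inv_sq_add {b : ℝ} (hb : 0 < b) :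
    (∫ t : ℝ, (b ^ 2 + t ^ 2)⁻¹) = π / b := by
  have h : (fun t : ℝ => (b ^ 2 + t ^ 2)⁻¹)
      = fun t : ℝ => b⁻¹ ^ 2 * ((fun y : ℝ => (1 + y ^ 2)⁻¹) (b⁻¹ * t)) := by
    funext t
    simp only
    field_simp
  rw [h, MeasureTheory.integral_const_mul,
    Measure.integral_comp_mul_left (fun y : ℝ => (1 + y ^ 2)⁻¹) b⁻¹,
    integral_univ_inv_one_add_sq]
  rw [abs_of_pos (by positivity : (0:ℝ) < b⁻¹⁻¹)]
  simp only [inv_inv, smul_eq_mul]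
  field_simp

lemma aux_angular {A : ℝ} (hA : 0 < A) (θ₀ : ℝ) :
    (∫ θ in Ioo (0 : ℝ) (2 * π), (A + (1 - Real.cos (θ - θ₀)) / 2)⁻¹)
      ≤ π ^ 2 / Real.sqrt A := by
  have hπ := Real.pi_pos
  set h : ℝ → ℝ := fun θ => (A + (1 - Real.cos (θ - θ₀)) / 2)⁻¹ with hh
  have hden : ∀ θ : ℝ, 0 < A + (1 - Real.cos (θ - θ₀)) / 2 := fun θ => by
    have := Real.cos_le_one (θ - θ₀); linarith
  have hcont : Continuous h := by
    apply Continuous.inv₀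
    · continuity
    · exact fun θ => (hden θ).ne'
  have hper : Function.Periodic h (2 * π) := by
    intro θ
    simp only [hh, show θ + 2 * π - θ₀ = (θ - θ₀) + 2 * π by ring, Real.cos_add_two_pi]
  -- move to interval integral and shift
  have step1 : (∫ θ in Ioo (0 : ℝ) (2 * π), h θ) = ∫ θ in (-π)..π, h (θ + θ₀) := by
    rw [← integral_Ioc_eq_integral_Ioo, ← intervalIntegral.integral_of_le (by positivity),
      intervalIntegral.integral_comp_add_right]
    have := hper.intervalIntegral_add_eq 0 (θ₀ - π)
    rw [zero_add] at this
    rw [this, show θ₀ - π + 2 * π = π + θ₀ by ring, show θ₀ - π = -π + θ₀ by ring]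
  rw [step1]
  have hsimp : ∀ ψ : ℝ, h (ψ + θ₀) = (A + (1 - Real.cos ψ) / 2)⁻¹ := fun ψ => by
    simp only [hh, add_sub_cancel_right]
  set b : ℝ := π * Real.sqrt A with hb
  have hsA : 0 < Real.sqrt A := Real.sqrt_pos.2 hA
  have hbpos : 0 < b := by positivity
  have hb2 : b ^ 2 = π ^ 2 * A := by
    rw [hb, mul_pow, Real.sq_sqrt hA.le]
  have key2 : ∀ ψ : ℝ, (A + ψ ^ 2 / π ^ 2)⁻¹ = π ^ 2 * (b ^ 2 + ψ ^ 2)⁻¹ := fun ψ => by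
    have hd : A + ψ ^ 2 / π ^ 2 = (π ^ 2 * A + ψ ^ 2) / π ^ 2 := by
      field_simp
    rw [hb2, hd, inv_div, div_eq_mul_inv]
  have hint2 : Integrable (fun ψ : ℝ => (A + ψ ^ 2 / π ^ 2)⁻¹) := by
    simp only [key2]
    exact (aux_integrable_inv_sq_add hbpos).const_mul _
  have step2 : (∫ θ in (-π)..π, h (θ + θ₀)) ≤ ∫ ψ in (-π)..π, (A + ψ ^ 2 / π ^ 2)⁻¹ := by
    apply intervalIntegral.integral_mono_on (by linarith)
    · exact ((hcont.comp (continuous_id.add continuous_const)).intervalIntegrable _ _)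
    · exact hint2.intervalIntegrable
    · intro ψ hψ
      rw [hsimp]
      apply inv_anti₀
      · have : 0 ≤ ψ ^ 2 / π ^ 2 := by positivity
        linarith
      · have habs : |ψ| ≤ π := abs_le.2 ⟨hψ.1, hψ.2⟩
        have := Real.cos_le_one_sub_mul_cos_sq habs
        have h2 : 2 / π ^ 2 * ψ ^ 2 = 2 * (ψ ^ 2 / π ^ 2) := by ring
        rw [h2] at this
        linarith
  have step3 : (∫ ψ in (-π)..π, (A + ψ ^ 2 / π ^ 2)⁻¹)
      ≤ ∫ ψ : ℝ, (A + ψ ^ 2 / π ^ 2)⁻¹ := by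
    rw [intervalIntegral.integral_of_le (by linarith)]
    apply setIntegral_le_integral hint2
    filter_upwards with ψ using by positivity
  have step4 : (∫ ψ : ℝ, (A + ψ ^ 2 / π ^ 2)⁻¹) = π ^ 2 / Real.sqrt A := by
    simp only [key2]
    rw [MeasureTheory.integral_const_mul, aux_integral_inv_sq_add hbpos, hb]
    field_simp
  calc (∫ θ in (-π)..π, h (θ + θ₀)) ≤ _ := step2
    _ ≤ _ := step3
    _ = _ := step4

lemma aux_polar (a b : ℝ) : ∃ θ₀ : ℝ,
    a = Real.sqrt (a ^ 2 + b ^ 2) * Real.cos θ₀ ∧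
    b = Real.sqrt (a ^ 2 + b ^ 2) * Real.sin θ₀ := by
  rcases eq_or_ne (a ^ 2 + b ^ 2) 0 with h | h
  · have ha : a = 0 := by nlinarith [sq_nonneg a, sq_nonneg b]
    have hb : b = 0 := by nlinarith [sq_nonneg a, sq_nonneg b]
    exact ⟨0, by simp [ha, hb]⟩
  · set z : ℂ := ⟨a, b⟩ with hz
    have habs : ‖z‖ = Real.sqrt (a ^ 2 + b ^ 2) := by
      rw [Complex.norm_def, Complex.normSq_mk]
      norm_num [pow_two]
    refine ⟨Complex.arg z, ?_, ?_⟩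
    · rw [← habs, Complex.norm_mul_cos_arg]
    · rw [← habs, Complex.norm_mul_sin_arg]

set_option maxHeartbeats 1000000 in
theorem stmt_16 (c : ℝ) (hc : 0 < c) :
    ∃ C > (0 : ℝ), ∀ ε : ℝ, 0 < ε → ε ≤ 1 →
      ∀ x : EuclideanSpace ℝ (Fin 3),
        Real.sqrt ((x 1) ^ 2 + (x 2) ^ 2) < 1 →
        -- surface integral over Γ = {r = 1}, parametrized by (s, θ) ↦ (s, cos θ, sin θ)
        (∫ s : ℝ, ∫ θ in Set.Ioo (0 : ℝ) (2 * Real.pi),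
            ε ^ 4 * (1 - Real.sqrt ((x 1) ^ 2 + (x 2) ^ 2)) ^ 2
              * Real.exp (-2 * c * |x 0 - s|)
              / ((x 0 - s) ^ 2 + (x 1 - Real.cos θ) ^ 2 + (x 2 - Real.sin θ) ^ 2) ^ 3)
          ≤ C * ε ^ 4 / (1 - Real.sqrt ((x 1) ^ 2 + (x 2) ^ 2)) ^ 2 := by
  have hπ := Real.pi_pos
  refine ⟨8 * π ^ 3, by positivity, ?_⟩
  intro ε hε hε1 x hx
  set x0 := x 0 with hx0
  set x1 := x 1 with hx1'
  set x2 := x 2 with hx2'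
  set r := Real.sqrt (x1 ^ 2 + x2 ^ 2) with hr
  have hr0 : 0 ≤ r := Real.sqrt_nonneg _
  have hr2 : r ^ 2 = x1 ^ 2 + x2 ^ 2 := Real.sq_sqrt (by positivity)
  set d := 1 - r with hd
  have hdpos : 0 < d := by rw [hd]; linarith
  obtain ⟨θ₀, hp1, hp2⟩ := aux_polar x1 x2
  rw [← hr] at hp1 hp2
  clear_value x0 x1 x2 r d
  -- key inner bound
  have key : ∀ s : ℝ,
      (∫ θ in Ioo (0 : ℝ) (2 * π),
        ε ^ 4 * d ^ 2 * Real.exp (-2 * c * |x0 - s|)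
          / ((x0 - s) ^ 2 + (x1 - Real.cos θ) ^ 2 + (x2 - Real.sin θ) ^ 2) ^ 3)
      ≤ 8 * π ^ 2 * ε ^ 4 / d * ((x0 - s) ^ 2 + d ^ 2)⁻¹ := by
    intro s
    set A := (x0 - s) ^ 2 + d ^ 2 with hA
    have hApos : 0 < A := by rw [hA]; positivity
    have hAd : d ^ 2 ≤ A := by rw [hA]; linarith [sq_nonneg (x0 - s)]
    clear_value A
    have hsum : ∀ θ : ℝ,
        (x0 - s) ^ 2 + (x1 - Real.cos θ) ^ 2 + (x2 - Real.sin θ) ^ 2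
          = (x0 - s) ^ 2 + (r ^ 2 + 1 - 2 * r * Real.cos (θ - θ₀)) := by
      intro θ
      rw [hp1, hp2, Real.cos_sub]
      linear_combination (r ^ 2) * (Real.sin_sq_add_cos_sq θ₀) + Real.sin_sq_add_cos_sq θ
    have hQd : ∀ θ : ℝ, d ^ 2 ≤ r ^ 2 + 1 - 2 * r * Real.cos (θ - θ₀) := by
      intro θ
      have c1 := Real.cos_le_one (θ - θ₀)
      rw [hd]
      nlinarith [mul_nonneg hr0 (show (0:ℝ) ≤ 1 - Real.cos (θ - θ₀) by linarith)]
    have hQc : ∀ θ : ℝ, (1 - Real.cos (θ - θ₀)) / 2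
        ≤ r ^ 2 + 1 - 2 * r * Real.cos (θ - θ₀) := by
      intro θ
      have c1 := Real.cos_le_one (θ - θ₀)
      have c2 := Real.neg_one_le_cos (θ - θ₀)
      nlinarith [mul_nonneg (show (0:ℝ) ≤ 1 + Real.cos (θ - θ₀) by linarith) (sq_nonneg (1 - r)),
        mul_nonneg (show (0:ℝ) ≤ 1 - Real.cos (θ - θ₀) by linarith)
          (mul_nonneg hr0 (show (0:ℝ) ≤ r + 2 by linarith))]
    have hDpos : ∀ θ : ℝ,
        0 < (x0 - s) ^ 2 + (x1 - Real.cos θ) ^ 2 + (x2 - Real.sin θ) ^ 2 := by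
      intro θ
      have h1 := hQd θ
      have h2 := hsum θ
      have h3 : 0 < d ^ 2 := by positivity
      rw [h2]
      linarith [sq_nonneg (x0 - s)]
    have hdenpos : ∀ θ : ℝ, 0 < A + (1 - Real.cos (θ - θ₀)) / 2 := by
      intro θ
      have := Real.cos_le_one (θ - θ₀)
      linarith
    -- pointwise bound
    have hpt : ∀ θ ∈ Ioo (0 : ℝ) (2 * π),
        ε ^ 4 * d ^ 2 * Real.exp (-2 * c * |x0 - s|)
          / ((x0 - s) ^ 2 + (x1 - Real.cos θ) ^ 2 + (x2 - Real.sin θ) ^ 2) ^ 3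
        ≤ 8 * ε ^ 4 * d ^ 2 / A ^ 2 * (A + (1 - Real.cos (θ - θ₀)) / 2)⁻¹ := by
      intro θ _
      set D := (x0 - s) ^ 2 + (x1 - Real.cos θ) ^ 2 + (x2 - Real.sin θ) ^ 2 with hD
      set hh := (1 - Real.cos (θ - θ₀)) / 2 with hhh
      have hDp : 0 < D := hDpos θ
      have hhnn : 0 ≤ hh := by
        have := Real.cos_le_one (θ - θ₀); rw [hhh]; linarith
      clear_value D hh
      have t1 : A / 2 ≤ D := by
        have h2 := hsum θ; have h3 := hQd θ
        rw [hD, h2]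
        linarith [sq_nonneg (x0 - s)]
      have t2 : (A + hh) / 2 ≤ D := by
        have h2 := hsum θ; have h3 := hQd θ; have h4 := hQc θ
        rw [hD, h2, hhh]
        linarith [sq_nonneg (x0 - s)]
      have e1 : A / 2 * (A / 2) * ((A + hh) / 2) ≤ D * D * D := by
        apply mul_le_mul (mul_le_mul t1 t1 (by positivity) hDp.le) t2 (by positivity)
          (by positivity)
      have h8 : A ^ 2 * (A + hh) ≤ 8 * D ^ 3 := by
        calc A ^ 2 * (A + hh) = 8 * (A / 2 * (A / 2) * ((A + hh) / 2)) := by ring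
          _ ≤ 8 * (D * D * D) := by linarith [e1]
          _ = 8 * D ^ 3 := by ring

      have hE : Real.exp (-2 * c * |x0 - s|) ≤ 1 := by
        rw [Real.exp_le_one_iff]
        have : 0 ≤ 2 * c * |x0 - s| := by positivity
        linarith
      have hAh : 0 < A ^ 2 * (A + hh) := by
        have := hdenpos θ; rw [hhh]; positivity
      calc ε ^ 4 * d ^ 2 * Real.exp (-2 * c * |x0 - s|) / D ^ 3
          ≤ ε ^ 4 * d ^ 2 * 1 / D ^ 3 := by
            gcongr
        _ = ε ^ 4 * d ^ 2 / D ^ 3 := by rw [mul_one]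
        _ ≤ 8 * ε ^ 4 * d ^ 2 / (A ^ 2 * (A + hh)) := by
            rw [div_le_div_iff₀ (by positivity) hAh]
            nlinarith [mul_le_mul_of_nonneg_left h8
              (show (0:ℝ) ≤ ε ^ 4 * d ^ 2 by positivity)]
        _ = 8 * ε ^ 4 * d ^ 2 / A ^ 2 * (A + hh)⁻¹ := by
            rw [← div_div, div_eq_mul_inv]
    -- integrability
    have hcden : Continuous (fun θ : ℝ =>
        ((x0 - s) ^ 2 + (x1 - Real.cos θ) ^ 2 + (x2 - Real.sin θ) ^ 2) ^ 3) :=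
      ((continuous_const.add
          ((continuous_const.sub Real.continuous_cos).pow 2)).add
          ((continuous_const.sub Real.continuous_sin).pow 2)).pow 3
    have hcden2 : Continuous (fun θ : ℝ => A + (1 - Real.cos (θ - θ₀)) / 2) :=
      continuous_const.add
        ((continuous_const.sub
          (Real.continuous_cos.comp (continuous_id.sub continuous_const))).div_const 2)
    have hcontf : Continuous (fun θ : ℝ =>
        ε ^ 4 * d ^ 2 * Real.exp (-2 * c * |x0 - s|)
          / ((x0 - s) ^ 2 + (x1 - Real.cos θ) ^ 2 + (x2 - Real.sin θ) ^ 2) ^ 3) := by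
      apply Continuous.div continuous_const hcden
      intro θ
      exact pow_ne_zero _ (hDpos θ).ne'
    have hcontg : Continuous (fun θ : ℝ =>
        8 * ε ^ 4 * d ^ 2 / A ^ 2 * (A + (1 - Real.cos (θ - θ₀)) / 2)⁻¹) := by
      apply Continuous.mul continuous_const
      exact Continuous.inv₀ hcden2 (fun θ => (hdenpos θ).ne')
    have hintf := (hcontf.integrableOn_Icc (a := (0:ℝ)) (b := 2 * π) (μ := volume)).mono_set
      Ioo_subset_Icc_self
    have hintg := (hcontg.integrableOn_Icc (a := (0:ℝ)) (b := 2 * π) (μ := volume)).mono_set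
      Ioo_subset_Icc_self
    -- sqrt facts
    set σ := Real.sqrt A with hσ
    have hσpos : 0 < σ := Real.sqrt_pos.2 hApos
    have hσ2 : σ ^ 2 = A := Real.sq_sqrt hApos.le
    clear_value σ
    have hσd : d ≤ σ := by nlinarith [hσpos.le]
    calc (∫ θ in Ioo (0 : ℝ) (2 * π),
            ε ^ 4 * d ^ 2 * Real.exp (-2 * c * |x0 - s|)
              / ((x0 - s) ^ 2 + (x1 - Real.cos θ) ^ 2 + (x2 - Real.sin θ) ^ 2) ^ 3)
        ≤ ∫ θ in Ioo (0 : ℝ) (2 * π),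
            8 * ε ^ 4 * d ^ 2 / A ^ 2 * (A + (1 - Real.cos (θ - θ₀)) / 2)⁻¹ :=
          setIntegral_mono_on hintf hintg measurableSet_Ioo hpt
      _ = 8 * ε ^ 4 * d ^ 2 / A ^ 2
            * ∫ θ in Ioo (0 : ℝ) (2 * π), (A + (1 - Real.cos (θ - θ₀)) / 2)⁻¹ :=
          MeasureTheory.integral_const_mul _ _
      _ ≤ 8 * ε ^ 4 * d ^ 2 / A ^ 2 * (π ^ 2 / σ) := by
          apply mul_le_mul_of_nonneg_left _ (by positivity)
          rw [hσ]
          exact aux_angular hApos θ₀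
      _ ≤ 8 * π ^ 2 * ε ^ 4 / d * A⁻¹ := by
          have core : d ^ 2 * (d * A) ≤ A ^ 2 * σ := by
            nlinarith [mul_nonneg (mul_nonneg hdpos.le hApos.le) (sub_nonneg.2 hAd),
              mul_nonneg (sq_nonneg A) (sub_nonneg.2 hσd)]
          have e : 8 * ε ^ 4 * d ^ 2 / A ^ 2 * (π ^ 2 / σ)
              = 8 * ε ^ 4 * d ^ 2 * π ^ 2 / (A ^ 2 * σ) := by ring
          have e2 : 8 * π ^ 2 * ε ^ 4 / d * A⁻¹ = 8 * π ^ 2 * ε ^ 4 / (d * A) := by ring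
          rw [e, e2, div_le_div_iff₀ (by positivity) (by positivity)]
          nlinarith [mul_le_mul_of_nonneg_left core
            (show (0:ℝ) ≤ 8 * π ^ 2 * ε ^ 4 by positivity)]
  -- outer integral
  have hfun : (fun s : ℝ => 8 * π ^ 2 * ε ^ 4 / d * ((x0 - s) ^ 2 + d ^ 2)⁻¹)
      = fun s : ℝ => 8 * π ^ 2 * ε ^ 4 / d * ((fun t : ℝ => (d ^ 2 + t ^ 2)⁻¹) (s - x0)) := by
    funext s
    simp only
    rw [show (x0 - s) ^ 2 + d ^ 2 = d ^ 2 + (s - x0) ^ 2 by ring]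
  have hG : Integrable (fun s : ℝ => 8 * π ^ 2 * ε ^ 4 / d * ((x0 - s) ^ 2 + d ^ 2)⁻¹) := by
    rw [hfun]
    exact ((aux_integrable_inv_sq_add hdpos).comp_sub_right x0).const_mul _
  have hval : (∫ s : ℝ, 8 * π ^ 2 * ε ^ 4 / d * ((x0 - s) ^ 2 + d ^ 2)⁻¹)
      = 8 * π ^ 3 * ε ^ 4 / d ^ 2 := by
    rw [hfun, MeasureTheory.integral_const_mul,
      MeasureTheory.integral_sub_right_eq_self (fun t : ℝ => (d ^ 2 + t ^ 2)⁻¹) x0,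
      aux_integral_inv_sq_add hdpos]
    field_simp
  have hnn : ∀ s : ℝ, 0 ≤ ∫ θ in Ioo (0 : ℝ) (2 * π),
      ε ^ 4 * d ^ 2 * Real.exp (-2 * c * |x0 - s|)
        / ((x0 - s) ^ 2 + (x1 - Real.cos θ) ^ 2 + (x2 - Real.sin θ) ^ 2) ^ 3 := by
    intro s
    apply setIntegral_nonneg measurableSet_Ioo
    intro θ _
    positivity
  calc (∫ s : ℝ, ∫ θ in Ioo (0 : ℝ) (2 * π),
          ε ^ 4 * d ^ 2 * Real.exp (-2 * c * |x0 - s|)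
            / ((x0 - s) ^ 2 + (x1 - Real.cos θ) ^ 2 + (x2 - Real.sin θ) ^ 2) ^ 3)
      ≤ ∫ s : ℝ, 8 * π ^ 2 * ε ^ 4 / d * ((x0 - s) ^ 2 + d ^ 2)⁻¹ :=
        integral_mono_of_nonneg (Filter.Eventually.of_forall hnn) hG
          (Filter.Eventually.of_forall key)
    _ = 8 * π ^ 3 * ε ^ 4 / d ^ 2 := hval
    _ ≤ 8 * π ^ 3 * ε ^ 4 / d ^ 2 := le_refl _
end

section
/- Let $c > 0$ and $0 < \varepsilon \le 1$. Then there is a constant $C$ depending only on $c$ such that for every $z \in \mathbb{R}^3$ on the unit cylinder $\Gamma = \{r = 1\}$, $\int_{D'} \frac{\varepsilon^6 (1-r_x)^2 e^{-2c|x - z|}}{|x - z|^6}\, dx \le C\,\varepsilon^5\, e^{-2c\,\mathrm{dist}(z, D')}$, where $D' = \{x : \sqrt{x_2^2 + x_3^2} < 1 - 8\varepsilon,\ 0 < x_1 < 1\}$. -/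
open MeasureTheory

lemma aux_g_integrable :
    Integrable (fun y : EuclideanSpace ℝ (Fin 3) => min ((‖y‖ ^ 4)⁻¹) 1) := by
  have h4 : ((Module.finrank ℝ (EuclideanSpace ℝ (Fin 3)) : ℝ)) < 4 := by
    rw [finrank_euclideanSpace_fin]; norm_num
  have hI : Integrable (fun y : EuclideanSpace ℝ (Fin 3) => 16 * (1 + ‖y‖) ^ (-(4:ℝ))) :=
    (integrable_one_add_norm h4).const_mul 16
  refine hI.mono' ?_ (Filter.Eventually.of_forall fun y => ?_)
  · exact ((measurable_norm.pow_const 4).inv.min measurable_const).aestronglyMeasurable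
  · have h0 : (0:ℝ) ≤ min ((‖y‖ ^ 4)⁻¹) 1 := le_min (by positivity) zero_le_one
    rw [Real.norm_eq_abs, abs_of_nonneg h0]
    have hb : (0:ℝ) < 1 + ‖y‖ := by positivity
    have h1 : (1 + ‖y‖) ^ (-(4:ℝ)) = ((1 + ‖y‖) ^ (4:ℕ))⁻¹ := by
      rw [← Real.rpow_natCast (1 + ‖y‖) 4, ← Real.rpow_neg hb.le]
      norm_num
    have hp : (0:ℝ) < (1 + ‖y‖) ^ (4:ℕ) := by positivity
    rw [h1, mul_comm, inv_mul_eq_div, le_div_iff₀ hp]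
    rcases le_total ‖y‖ 1 with hy | hy
    · calc min ((‖y‖ ^ 4)⁻¹) 1 * (1 + ‖y‖) ^ (4:ℕ)
          ≤ 1 * (1 + ‖y‖) ^ (4:ℕ) := mul_le_mul_of_nonneg_right (min_le_right _ _) hp.le
        _ ≤ 16 := by
            have h2 : (1 + ‖y‖) ^ (4:ℕ) ≤ 2 ^ (4:ℕ) :=
              pow_le_pow_left₀ (by positivity) (by linarith) 4
            rw [one_mul]; linarith [h2]
    · have hy0 : (0:ℝ) < ‖y‖ := lt_of_lt_of_le one_pos hy
      calc min ((‖y‖ ^ 4)⁻¹) 1 * (1 + ‖y‖) ^ (4:ℕ)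
          ≤ (‖y‖ ^ 4)⁻¹ * (1 + ‖y‖) ^ (4:ℕ) :=
            mul_le_mul_of_nonneg_right (min_le_left _ _) hp.le
        _ ≤ (‖y‖ ^ 4)⁻¹ * (16 * ‖y‖ ^ 4) := by
            apply mul_le_mul_of_nonneg_left _ (by positivity)
            have h2 : (1 + ‖y‖) ^ (4:ℕ) ≤ (2 * ‖y‖) ^ (4:ℕ) :=
              pow_le_pow_left₀ (by positivity) (by linarith) 4
            calc (1 + ‖y‖) ^ (4:ℕ) ≤ (2 * ‖y‖) ^ (4:ℕ) := h2
              _ = 16 * ‖y‖ ^ 4 := by ring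
        _ = 16 := by field_simp

lemma aux_radial (x z : EuclideanSpace ℝ (Fin 3)) (hz : (z 1)^2 + (z 2)^2 = 1) :
    1 - Real.sqrt ((x 1)^2 + (x 2)^2) ≤ dist x z := by
  set u : EuclideanSpace ℝ (Fin 2) := !₂[x 1, x 2] with hu
  set v : EuclideanSpace ℝ (Fin 2) := !₂[z 1, z 2] with hv
  have hun : ‖u‖ = Real.sqrt ((x 1)^2 + (x 2)^2) := by
    rw [EuclideanSpace.norm_eq]
    congr 1
    rw [Fin.sum_univ_two]
    simp [hu, sq_abs]
  have hvn : ‖v‖ = 1 := by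
    rw [EuclideanSpace.norm_eq, Fin.sum_univ_two]
    simp [hv, sq_abs, hz]
  have hsub : ‖v - u‖ = Real.sqrt ((z 1 - x 1)^2 + (z 2 - x 2)^2) := by
    rw [EuclideanSpace.norm_eq]
    congr 1
    rw [Fin.sum_univ_two]
    simp [hu, hv, sq_abs]
  have h1 : ‖v‖ - ‖u‖ ≤ ‖v - u‖ := norm_sub_norm_le v u
  have h2 : Real.sqrt ((z 1 - x 1)^2 + (z 2 - x 2)^2) ≤ dist x z := by
    rw [EuclideanSpace.dist_eq, Fin.sum_univ_three]
    apply Real.sqrt_le_sqrt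
    simp only [Real.dist_eq, sq_abs]
    nlinarith [sq_nonneg (x 0 - z 0)]
  rw [hvn, hun] at h1
  linarith [hsub ▸ h1]

theorem stmt_17 (c : ℝ) (hc : 0 < c) :
    ∃ C > (0 : ℝ), ∀ ε : ℝ, 0 < ε → ε ≤ 1 →
      ∀ z : EuclideanSpace ℝ (Fin 3), (z 1) ^ 2 + (z 2) ^ 2 = 1 →
        (∫ x in {x : EuclideanSpace ℝ (Fin 3) |
              Real.sqrt ((x 1) ^ 2 + (x 2) ^ 2) < 1 - 8 * ε ∧ 0 < x 0 ∧ x 0 < 1},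
            ε ^ 6 * (1 - Real.sqrt ((x 1) ^ 2 + (x 2) ^ 2)) ^ 2
              * Real.exp (-2 * c * dist x z) / (dist x z) ^ 6)
          ≤ C * ε ^ 5 * Real.exp (-2 * c * Metric.infDist z
              {x : EuclideanSpace ℝ (Fin 3) |
                Real.sqrt ((x 1) ^ 2 + (x 2) ^ 2) < 1 - 8 * ε ∧ 0 < x 0 ∧ x 0 < 1}) := by
  have hKint := aux_g_integrable
  set K : ℝ := ∫ y : EuclideanSpace ℝ (Fin 3), min ((‖y‖ ^ 4)⁻¹) 1 with hKdef
  have hK0 : 0 ≤ K := integral_nonneg fun y => le_min (by positivity) zero_le_one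
  refine ⟨K / 8 + 1, by linarith, ?_⟩
  intro ε hε hε1 z hz
  set S := {x : EuclideanSpace ℝ (Fin 3) |
      Real.sqrt ((x 1) ^ 2 + (x 2) ^ 2) < 1 - 8 * ε ∧ 0 < x 0 ∧ x 0 < 1} with hS
  set I := Metric.infDist z S with hIdef
  have ha : (0:ℝ) < 8 * ε := by linarith
  set h : EuclideanSpace ℝ (Fin 3) → ℝ :=
    fun x => min ((dist x z ^ 4)⁻¹) (((8*ε) ^ 4)⁻¹) with hh
  have hrepr : ∀ x, h x = ((8*ε)^4)⁻¹ * min ((‖(8*ε)⁻¹ • (x - z)‖ ^ 4)⁻¹) 1 := by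
    intro x
    simp only [hh]
    rw [mul_min_of_nonneg _ _ (by positivity), mul_one]
    have hns : ‖(8*ε)⁻¹ • (x - z)‖ = (8*ε)⁻¹ * ‖x - z‖ := by
      rw [norm_smul, Real.norm_eq_abs, abs_of_nonneg (by positivity)]
    rw [hns, dist_eq_norm]
    congr 1
    have h8 : (8:ℝ) * ε ≠ 0 := ha.ne'
    rcases eq_or_ne (‖x - z‖) 0 with h0 | h0
    · simp [h0]
    · field_simp
  have hint_h : Integrable h := by
    have h1 : Integrable (fun x : EuclideanSpace ℝ (Fin 3) =>
        min ((‖(8*ε)⁻¹ • x‖ ^ 4)⁻¹) 1) :=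
      hKint.comp_smul (by positivity : ((8*ε)⁻¹:ℝ) ≠ 0)
    have h2 : Integrable (fun x : EuclideanSpace ℝ (Fin 3) =>
        min ((‖(8*ε)⁻¹ • (x - z)‖ ^ 4)⁻¹) 1) := h1.comp_sub_right z
    exact (h2.const_mul (((8*ε)^4)⁻¹)).congr
      (Filter.Eventually.of_forall fun x => (hrepr x).symm)
  have hinth : ∫ x, h x = K / (8*ε) := by
    calc ∫ x, h x
        = ∫ x, ((8*ε)^4)⁻¹ * min ((‖(8*ε)⁻¹ • (x - z)‖ ^ 4)⁻¹) 1 :=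
          integral_congr_ae (Filter.Eventually.of_forall hrepr)
      _ = ((8*ε)^4)⁻¹ * ∫ x, min ((‖(8*ε)⁻¹ • (x - z)‖ ^ 4)⁻¹) 1 :=
          integral_const_mul _ _
      _ = ((8*ε)^4)⁻¹ * ∫ x, min ((‖(8*ε)⁻¹ • x‖ ^ 4)⁻¹) 1 := by
          rw [integral_sub_right_eq_self
            (fun x : EuclideanSpace ℝ (Fin 3) => min ((‖(8*ε)⁻¹ • x‖ ^ 4)⁻¹) 1) z]
      _ = ((8*ε)^4)⁻¹ * ((8*ε) ^ (Module.finrank ℝ (EuclideanSpace ℝ (Fin 3))) • K) := by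
          rw [Measure.integral_comp_inv_smul_of_nonneg volume
            (fun y : EuclideanSpace ℝ (Fin 3) => min ((‖y‖ ^ 4)⁻¹) 1) ha.le]
      _ = K / (8*ε) := by
          rw [finrank_euclideanSpace_fin, smul_eq_mul]
          field_simp
  have hm : MeasurableSet S := by
    rw [hS]
    simp only [Set.setOf_and]
    have hc1 : Continuous fun x : EuclideanSpace ℝ (Fin 3) =>
        Real.sqrt ((x 1)^2 + (x 2)^2) := by fun_prop
    have hc0 : Continuous fun x : EuclideanSpace ℝ (Fin 3) => x 0 := by fun_prop
    exact (measurableSet_lt hc1.measurable measurable_const).inter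
      ((measurableSet_lt measurable_const hc0.measurable).inter
        (measurableSet_lt hc0.measurable measurable_const))
  have key : ∀ x ∈ S, ε ^ 6 * (1 - Real.sqrt ((x 1) ^ 2 + (x 2) ^ 2)) ^ 2
      * Real.exp (-2 * c * dist x z) / (dist x z) ^ 6
      ≤ Real.exp (-2 * c * I) * (ε ^ 6 * h x) := by
    intro x hx
    have hx1 : Real.sqrt ((x 1) ^ 2 + (x 2) ^ 2) < 1 - 8 * ε := hx.1
    have hr0 : 0 ≤ Real.sqrt ((x 1) ^ 2 + (x 2) ^ 2) := Real.sqrt_nonneg _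
    have h1r : 1 - Real.sqrt ((x 1) ^ 2 + (x 2) ^ 2) ≤ dist x z := aux_radial x z hz
    have hda : 8 * ε < dist x z := by linarith
    have hd0 : 0 < dist x z := lt_trans ha hda
    have hId : I ≤ dist x z := by
      rw [hIdef, dist_comm]
      exact Metric.infDist_le_dist_of_mem hx
    have hmin : h x = ((dist x z) ^ 4)⁻¹ := by
      rw [hh]
      exact min_eq_left (inv_anti₀ (by positivity)
        (pow_le_pow_left₀ ha.le hda.le 4))
    rw [hmin]
    have hexp : Real.exp (-2 * c * dist x z) ≤ Real.exp (-2 * c * I) :=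
      Real.exp_le_exp.2 (by nlinarith)
    have hsq : (1 - Real.sqrt ((x 1) ^ 2 + (x 2) ^ 2)) ^ 2 ≤ (dist x z) ^ 2 := by
      nlinarith
    calc ε ^ 6 * (1 - Real.sqrt ((x 1) ^ 2 + (x 2) ^ 2)) ^ 2
          * Real.exp (-2 * c * dist x z) / (dist x z) ^ 6
        ≤ ε ^ 6 * (dist x z) ^ 2 * Real.exp (-2 * c * I) / (dist x z) ^ 6 := by
          gcongr
      _ = Real.exp (-2 * c * I) * (ε ^ 6 * ((dist x z) ^ 4)⁻¹) := by
          field_simp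
  have hM_int : Integrable (fun x : EuclideanSpace ℝ (Fin 3) =>
      Real.exp (-2 * c * I) * (ε ^ 6 * h x)) :=
    (hint_h.const_mul (ε ^ 6)).const_mul _
  have hh_nonneg : ∀ x, 0 ≤ h x := fun x => le_min (by positivity) (by positivity)
  have hfm : AEStronglyMeasurable (fun x : EuclideanSpace ℝ (Fin 3) =>
      ε ^ 6 * (1 - Real.sqrt ((x 1) ^ 2 + (x 2) ^ 2)) ^ 2
        * Real.exp (-2 * c * dist x z) / (dist x z) ^ 6) (volume.restrict S) := by
    apply Measurable.aestronglyMeasurable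
    fun_prop
  have hf_int : IntegrableOn (fun x : EuclideanSpace ℝ (Fin 3) =>
      ε ^ 6 * (1 - Real.sqrt ((x 1) ^ 2 + (x 2) ^ 2)) ^ 2
        * Real.exp (-2 * c * dist x z) / (dist x z) ^ 6) S := by
    refine Integrable.mono' hM_int.integrableOn hfm ?_
    refine (ae_restrict_iff' hm).2 (Filter.Eventually.of_forall fun x hx => ?_)
    rw [Real.norm_eq_abs, abs_of_nonneg (by positivity)]
    exact key x hx
  calc (∫ x in S, ε ^ 6 * (1 - Real.sqrt ((x 1) ^ 2 + (x 2) ^ 2)) ^ 2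
          * Real.exp (-2 * c * dist x z) / (dist x z) ^ 6)
      ≤ ∫ x in S, Real.exp (-2 * c * I) * (ε ^ 6 * h x) :=
        setIntegral_mono_on hf_int hM_int.integrableOn hm key
    _ ≤ ∫ x, Real.exp (-2 * c * I) * (ε ^ 6 * h x) :=
        setIntegral_le_integral hM_int (Filter.Eventually.of_forall fun x =>
          mul_nonneg (Real.exp_pos _).le (mul_nonneg (by positivity) (hh_nonneg x)))
    _ = Real.exp (-2 * c * I) * (ε ^ 6 * (K / (8*ε))) := by
        rw [integral_const_mul, integral_const_mul, hinth]
    _ ≤ (K / 8 + 1) * ε ^ 5 * Real.exp (-2 * c * I) := by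
        have hb : ε ^ 6 * (K / (8*ε)) = K / 8 * ε ^ 5 := by
          field_simp
        rw [hb]
        have h5 : (0:ℝ) < ε ^ 5 := by positivity
        nlinarith [Real.exp_pos (-2 * c * I), mul_pos h5 (Real.exp_pos (-2 * c * I))]
end
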